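/- Under the hypotheses that the polynomial equation Σ_{ℓ=-r}^p a_ℓ z^{ℓ+r} = 0 has exactly r − 1 roots (with multiplicity) in the punctured open unit disk, with r ≥ 1: the only real number u for which there exists a sequence (v_j)_{j∈ℕ} satisfying (i) v_0 = … = v_{r-1} = −u, (ii) Σ_{ℓ=-r}^p a_ℓ v_{j+ℓ+r} = 0 for all j ≥ 0, and (iii) v_j → 0 as j → ∞, is u = 0, and then v is the zero sequence. -/

import Mathlib

open Polynomial

open Filter Complex Set

/-- summability of c j * z^j for bounded c, |z| < 1 -/
lemma summable_aux (c : ℕ → ℂ) (M : ℝ) (hM : ∀ j, ‖c j‖ ≤ M) (z : ℂ) (hz : ‖z‖ < 1) :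
    Summable (fun j => c j * z ^ j) := by
  apply Summable.of_norm_bounded (g := fun j => M * ‖z‖ ^ j)
    ((summable_geometric_of_lt_one (norm_nonneg z) hz).mul_left M)
  intro j
  rw [norm_mul, norm_pow]
  exact mul_le_mul_of_nonneg_right (hM j) (pow_nonneg (norm_nonneg z) j)

/-- Lemma Z : coefficient extraction -/
lemma coeff_zero_of_tsum_zero (c : ℕ → ℂ) (M : ℝ) (hM : ∀ j, ‖c j‖ ≤ M)
    (δ : ℝ) (hδ : 0 < δ)
    (h0 : ∀ t : ℝ, 0 < t → t < δ → ∑' j, c j * (t : ℂ) ^ j = 0) :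
    ∀ j, c j = 0 := by
  have hM0 : 0 ≤ M := le_trans (norm_nonneg _) (hM 0)
  set δ' := min δ (1/2) with hδ'def
  have hδ' : 0 < δ' := lt_min hδ (by norm_num)
  have hδ'le : δ' ≤ 1/2 := min_le_right _ _
  intro j
  induction j using Nat.strong_induction_on with
  | _ j IH =>
  have key : ∀ t : ℝ, 0 < t → t < δ' → ‖c j‖ ≤ 2 * M * t := by
    intro t ht ht'
    have htlt : (t:ℝ) < 1 := lt_of_lt_of_le ht' (le_trans hδ'le (by norm_num))
    have htC : ‖(t:ℂ)‖ < 1 := by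
      rwa [Complex.norm_real, Real.norm_eq_abs, abs_of_pos ht]
    have hs : Summable (fun i => c i * (t:ℂ) ^ i) := summable_aux c M hM _ htC
    have h00 : ∑' i, c i * (t:ℂ) ^ i = 0 := h0 t ht (lt_of_lt_of_le ht' (min_le_left _ _))
    have h1 := Summable.sum_add_tsum_nat_add j hs
    have hzero : ∑ i ∈ Finset.range j, c i * (t:ℂ) ^ i = 0 := by
      apply Finset.sum_eq_zero
      intro i hi
      rw [IH i (Finset.mem_range.1 hi), zero_mul]
    rw [hzero, zero_add, h00] at h1
    -- h1 : ∑' i, c (i+j) * t^(i+j) = 0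
    have h2 : ∑' i, c (i + j) * (t:ℂ) ^ (i + j) = (t:ℂ)^j * ∑' i, c (i + j) * (t:ℂ) ^ i := by
      rw [← tsum_mul_left]
      congr 1; funext i; rw [pow_add]; ring
    rw [h2] at h1
    have htne : (t:ℂ) ^ j ≠ 0 := pow_ne_zero _ (by exact_mod_cast ne_of_gt ht)
    have h3 : ∑' i, c (i + j) * (t:ℂ) ^ i = 0 := by
      rcases mul_eq_zero.1 h1 with h | h
      · exact absurd h htne
      · exact h
    have hs2 : Summable (fun i => c (i + j) * (t:ℂ) ^ i) :=
      summable_aux (fun i => c (i + j)) M (fun i => hM _) _ htC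
    have h4 := Summable.sum_add_tsum_nat_add 1 hs2
    rw [h3] at h4
    have h5 : c j = -∑' i, c (i + 1 + j) * (t:ℂ) ^ (i + 1) := by
      have : ∑ i ∈ Finset.range 1, c (i + j) * (t:ℂ) ^ i = c j := by simp
      rw [this] at h4
      linear_combination h4
    rw [h5, norm_neg]
    have hsnorm : Summable (fun i => M * t ^ (i + 1)) := by
      apply Summable.mul_left
      exact ((summable_geometric_of_lt_one (le_of_lt ht) htlt).comp_injective
        (add_left_injective 1))
    calc ‖∑' i, c (i + 1 + j) * (t:ℂ) ^ (i + 1)‖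
        ≤ ∑' i, ‖c (i + 1 + j) * (t:ℂ) ^ (i + 1)‖ := norm_tsum_le_tsum_norm (by
          apply Summable.of_nonneg_of_le (fun i => norm_nonneg _) _ hsnorm
          intro i
          rw [norm_mul, norm_pow, Complex.norm_real, Real.norm_eq_abs, abs_of_pos ht]
          exact mul_le_mul_of_nonneg_right (hM _) (pow_nonneg (le_of_lt ht) _))
      _ ≤ ∑' i, M * t ^ (i + 1) := by
          apply Summable.tsum_le_tsum _ _ hsnorm
          · intro i
            rw [norm_mul, norm_pow, Complex.norm_real, Real.norm_eq_abs, abs_of_pos ht]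
            exact mul_le_mul_of_nonneg_right (hM _) (pow_nonneg (le_of_lt ht) _)
          · apply Summable.of_nonneg_of_le (fun i => norm_nonneg _) _ hsnorm
            intro i
            rw [norm_mul, norm_pow, Complex.norm_real, Real.norm_eq_abs, abs_of_pos ht]
            exact mul_le_mul_of_nonneg_right (hM _) (pow_nonneg (le_of_lt ht) _)
      _ = M * t * (1-t)⁻¹ := by
          rw [tsum_mul_left]
          have : ∑' i : ℕ, t ^ (i + 1) = t * (1-t)⁻¹ := by
            rw [← tsum_geometric_of_lt_one (le_of_lt ht) htlt, ← tsum_mul_left]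
            congr 1; funext i; rw [pow_succ]; ring
          rw [this]; ring
      _ ≤ 2 * M * t := by
          have h1t : (1:ℝ) - t ≥ 1/2 := by
            have := lt_of_lt_of_le ht' hδ'le
            linarith
          have : (1 - t)⁻¹ ≤ 2 := by
            rw [inv_le_comm₀ (by linarith) (by norm_num)]
            linarith
          calc M * t * (1-t)⁻¹ ≤ M * t * 2 :=
                mul_le_mul_of_nonneg_left this (mul_nonneg hM0 (le_of_lt ht))
            _ = 2 * M * t := by ring
  by_contra hc
  have hcpos : 0 < ‖c j‖ := norm_pos_iff.2 hc
  set t := min (δ'/2) (‖c j‖ / (4*M + 1)) with htdef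
  have htpos : 0 < t := lt_min (by linarith) (div_pos hcpos (by linarith))
  have := key t htpos (lt_of_le_of_lt (min_le_left _ _) (by linarith))
  have h2 : t ≤ ‖c j‖ / (4*M+1) := min_le_right _ _
  have h3 : 2 * M * t ≤ 2 * M * (‖c j‖ / (4*M+1)) :=
    mul_le_mul_of_nonneg_left h2 (by linarith)
  have h4 : 2 * M * (‖c j‖ / (4*M+1)) < ‖c j‖ := by
    rw [mul_comm, div_mul_eq_mul_div, div_lt_iff₀ (by linarith : (0:ℝ) < 4*M+1)]
    nlinarith
  linarith

/-- Abel-type lemma: if v → 0 and |ω| ≤ 1, then (1-t) * Σ v_j (tω)^j → 0 as t → 1⁻. -/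
lemma abel_tendsto (v : ℕ → ℝ) (hv : Filter.Tendsto v Filter.atTop (nhds 0))
    (M : ℝ) (hM0 : 0 ≤ M) (hM : ∀ j, |v j| ≤ M)
    (ω : ℂ) (hω : ‖ω‖ ≤ 1) :
    Filter.Tendsto (fun t : ℝ => ((1:ℂ) - (t:ℂ)) * ∑' j, (v j : ℂ) * ((t:ℂ) * ω) ^ j)
      (nhdsWithin 1 (Set.Ioo (0:ℝ) 1)) (nhds 0) := by
  rw [Metric.tendsto_nhdsWithin_nhds]
  intro ε hε
  -- choose N with |v j| < ε/3 for j ≥ N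
  obtain ⟨N, hN⟩ := (Metric.tendsto_atTop.1 hv) (ε/3) (by linarith)
  have hN' : ∀ j, N ≤ j → |v j| ≤ ε/3 := by
    intro j hj
    have := hN j hj
    rw [Real.dist_eq, sub_zero] at this
    linarith
  set C : ℝ := ∑ j ∈ Finset.range N, |v j| with hC
  have hC0 : 0 ≤ C := Finset.sum_nonneg fun j _ => abs_nonneg _
  refine ⟨ε/(3*(C+1)), by positivity, ?_⟩
  intro t ht hdist
  obtain ⟨ht0, ht1⟩ := ht
  rw [Real.dist_eq, abs_of_nonpos (by linarith)] at hdist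
  -- hdist : -(t - 1) < ε/(3*(C+1)), i.e. 1 - t < ...
  have h1t : 1 - t < ε/(3*(C+1)) := by linarith
  rw [dist_zero_right]
  have htC : ‖(t:ℂ) * ω‖ < 1 := by
    rw [norm_mul, Complex.norm_real, Real.norm_eq_abs, abs_of_pos ht0]
    calc t * ‖ω‖ ≤ t * 1 := mul_le_mul_of_nonneg_left hω (le_of_lt ht0)
      _ < 1 := by linarith
  have hvsum : Summable (fun j => (v j : ℂ) * ((t:ℂ)*ω) ^ j) :=
    summable_aux _ M (fun j => by rw [Complex.norm_real, Real.norm_eq_abs]; exact hM j) _ htC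
  have hgeo : Summable (fun j : ℕ => t ^ j) := summable_geometric_of_lt_one (le_of_lt ht0) ht1
  have habs : Summable (fun j => |v j| * t ^ j) := by
    apply Summable.of_nonneg_of_le (fun j => mul_nonneg (abs_nonneg _) (pow_nonneg (le_of_lt ht0) _))
      (fun j => mul_le_mul_of_nonneg_right (hM j) (pow_nonneg (le_of_lt ht0) _))
      (hgeo.mul_left M)
  have step1 : ‖((1:ℂ) - (t:ℂ)) * ∑' j, (v j : ℂ) * ((t:ℂ)*ω) ^ j‖
      ≤ (1 - t) * ∑' j, |v j| * t ^ j := by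
    rw [norm_mul]
    have h1 : ‖(1:ℂ) - (t:ℂ)‖ = 1 - t := by
      rw [show (1:ℂ) - (t:ℂ) = ((1 - t : ℝ) : ℂ) by push_cast; ring,
        Complex.norm_real, Real.norm_eq_abs, abs_of_pos (by linarith)]
    rw [h1]
    apply mul_le_mul_of_nonneg_left _ (by linarith)
    calc ‖∑' j, (v j : ℂ) * ((t:ℂ)*ω) ^ j‖ ≤ ∑' j, ‖(v j : ℂ) * ((t:ℂ)*ω) ^ j‖ :=
          norm_tsum_le_tsum_norm hvsum.norm
      _ ≤ ∑' j, |v j| * t ^ j := by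
          apply Summable.tsum_le_tsum _ hvsum.norm habs
          intro j
          rw [norm_mul, norm_pow, norm_mul, Complex.norm_real, Complex.norm_real,
            Real.norm_eq_abs, Real.norm_eq_abs, abs_of_pos ht0]
          calc |v j| * (t * ‖ω‖) ^ j ≤ |v j| * (t * 1) ^ j := by
                apply mul_le_mul_of_nonneg_left _ (abs_nonneg _)
                apply pow_le_pow_left₀ (mul_nonneg (le_of_lt ht0) (norm_nonneg _))
                exact mul_le_mul_of_nonneg_left hω (le_of_lt ht0)
            _ = |v j| * t ^ j := by rw [mul_one]
  have step2 : ∑' j, |v j| * t ^ j ≤ C + (ε/3) * (1-t)⁻¹ := by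
    rw [← Summable.sum_add_tsum_nat_add N habs]
    apply add_le_add
    · apply Finset.sum_le_sum
      intro j _
      calc |v j| * t ^ j ≤ |v j| * 1 := by
            apply mul_le_mul_of_nonneg_left _ (abs_nonneg _)
            exact pow_le_one₀ (le_of_lt ht0) (le_of_lt ht1)
        _ = |v j| := mul_one _
    · calc ∑' j, |v (j + N)| * t ^ (j + N) ≤ ∑' j, (ε/3) * t ^ j := by
            apply Summable.tsum_le_tsum _ (habs.comp_injective (add_left_injective N)) (hgeo.mul_left _)
            intro j
            calc |v (j+N)| * t ^ (j+N) ≤ (ε/3) * t ^ (j+N) :=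
                  mul_le_mul_of_nonneg_right (hN' _ (Nat.le_add_left _ _))
                    (pow_nonneg (le_of_lt ht0) _)
              _ ≤ (ε/3) * t ^ j := by
                  apply mul_le_mul_of_nonneg_left _ (by linarith)
                  exact pow_le_pow_of_le_one (le_of_lt ht0) (le_of_lt ht1)
                    (Nat.le_add_right _ _)
        _ = (ε/3) * (1-t)⁻¹ := by rw [tsum_mul_left, tsum_geometric_of_lt_one (le_of_lt ht0) ht1]
  have step3 : (1 - t) * (C + (ε/3) * (1-t)⁻¹) < ε := by
    have h1tpos : 0 < 1 - t := by linarith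
    rw [mul_add]
    have e1 : (1-t) * ((ε/3) * (1-t)⁻¹) = ε/3 := by
      field_simp
    rw [e1]
    have e2 : (1-t) * C < ε/3 := by
      calc (1-t) * C ≤ (1-t) * (C+1) := by nlinarith
        _ < (ε/(3*(C+1))) * (C+1) := by
            apply mul_lt_mul_of_pos_right h1t (by linarith)
        _ = ε/3 := by field_simp
    linarith
  calc ‖((1:ℂ) - (t:ℂ)) * ∑' j, (v j : ℂ) * ((t:ℂ)*ω) ^ j‖
      ≤ (1 - t) * ∑' j, |v j| * t ^ j := step1
    _ ≤ (1 - t) * (C + (ε/3) * (1-t)⁻¹) :=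
        mul_le_mul_of_nonneg_left step2 (by linarith)
    _ < ε := step3

open Polynomial

lemma sum_icc_eq {M : Type*} [AddCommMonoid M] (r p : ℕ) (f : ℤ → M) :
    ∑ ℓ ∈ Finset.Icc (-(r:ℤ)) (p:ℤ), f ℓ = ∑ k ∈ Finset.range (p+r+1), f ((k:ℤ) - r) := by
  apply Finset.sum_nbij' (i := fun ℓ : ℤ => (ℓ + r).toNat) (j := fun k : ℕ => (k:ℤ) - r)
  · intro ℓ hℓ
    rw [Finset.mem_Icc] at hℓ
    rw [Finset.mem_range]
    omega
  · intro k hk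
    rw [Finset.mem_range] at hk
    rw [Finset.mem_Icc]
    omega
  · intro ℓ hℓ
    rw [Finset.mem_Icc] at hℓ
    omega
  · intro k hk
    rw [Finset.mem_range] at hk
    omega
  · intro ℓ hℓ
    rw [Finset.mem_Icc] at hℓ
    congr 1
    omega

lemma one_sub_ne (w : ℂ) : (1 : Polynomial ℂ) - Polynomial.C w * Polynomial.X ≠ 0 := by
  intro h
  have := congrArg (fun q => Polynomial.coeff q 0) h
  simp at this

lemma natDeg_one_sub (w : ℂ) (hw : w ≠ 0) :
    ((1:Polynomial ℂ) - Polynomial.C w * Polynomial.X).natDegree = 1 := by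
  rw [show (1:Polynomial ℂ) - Polynomial.C w * Polynomial.X
      = Polynomial.C (-w) * Polynomial.X + Polynomial.C 1 by rw [map_neg, map_one]; ring]
  exact Polynomial.natDegree_linear (neg_ne_zero.2 hw)

lemma prod_one_sub_ne (S : Multiset ℂ) :
    (Multiset.map (fun w => (1:Polynomial ℂ) - Polynomial.C w * Polynomial.X) S).prod ≠ 0 := by
  intro h
  rw [Multiset.prod_eq_zero_iff] at h
  obtain ⟨w, _, hw⟩ := Multiset.mem_map.1 h
  exact one_sub_ne w hw

lemma natDegree_prod_one_sub (S : Multiset ℂ) (hS : ∀ w ∈ S, w ≠ 0) :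
    (Multiset.map (fun w => (1:Polynomial ℂ) - Polynomial.C w * Polynomial.X) S).prod.natDegree
      = Multiset.card S := by
  induction S using Multiset.induction_on with
  | empty => simp
  | cons a S ih =>
    simp only [Multiset.map_cons, Multiset.prod_cons, Multiset.card_cons]
    rw [Polynomial.natDegree_mul (one_sub_ne a) (prod_one_sub_ne S),
      natDeg_one_sub a (hS a (Multiset.mem_cons_self a S)),
      ih (fun w hw => hS w (Multiset.mem_cons_of_mem hw))]
    exact add_comm _ _

lemma eval_prod_one_sub (S : Multiset ℂ) (z : ℂ) :
    (Multiset.map (fun w => (1:Polynomial ℂ) - Polynomial.C w * Polynomial.X) S).prod.eval z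
      = (Multiset.map (fun w => 1 - w * z) S).prod := by
  rw [Polynomial.eval_multiset_prod, Multiset.map_map]
  congr 1
  apply Multiset.map_congr rfl
  intro w _
  simp

set_option maxHeartbeats 2000000

/-- if the characteristic polynomial has exactly r - 1 roots (with
multiplicity) in the punctured open unit disk, then the only boundary layer profile
is the trivial one: u = 0 and v ≡ 0. -/
theorem stmt8 (r p : ℕ) (hr : 1 ≤ r) (a : ℤ → ℝ)
    (har : a (-(r : ℤ)) ≠ 0) (hap : a p ≠ 0)
    (hcount : Multiset.card
      ((∑ ℓ ∈ Finset.Icc (-(r : ℤ)) (p : ℤ),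
          Polynomial.C (a ℓ : ℂ) * Polynomial.X ^ (ℓ + r).toNat).roots.filter
        (fun z => ‖z‖ < 1 ∧ z ≠ 0)) = r - 1) :
    ∀ (u : ℝ) (v : ℕ → ℝ),
      (∀ j : ℕ, j < r → v j = -u) →
      (∀ j : ℕ, ∑ ℓ ∈ Finset.Icc (-(r : ℤ)) (p : ℤ), a ℓ * v (j + (ℓ + r).toNat) = 0) →
      Filter.Tendsto v Filter.atTop (nhds 0) →
      u = 0 ∧ ∀ j : ℕ, v j = 0 := by
  intro u v hbc hrec hv
  -- uniform bound on v
  obtain ⟨M, hM0, hM⟩ : ∃ M : ℝ, 0 ≤ M ∧ ∀ j, |v j| ≤ M := by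
    obtain ⟨N, hN⟩ := (Metric.tendsto_atTop.1 hv) 1 one_pos
    refine ⟨(∑ j ∈ Finset.range N, |v j|) + 1, by positivity, ?_⟩
    intro j
    have h2 : (0:ℝ) ≤ ∑ i ∈ Finset.range N, |v i| := Finset.sum_nonneg fun i _ => abs_nonneg _
    by_cases hj : j < N
    · have h1 : |v j| ≤ ∑ i ∈ Finset.range N, |v i| :=
        Finset.single_le_sum (f := fun i => |v i|) (fun i _ => abs_nonneg _) (Finset.mem_range.2 hj)
      linarith
    · have := hN j (le_of_not_gt hj)
      rw [Real.dist_eq, sub_zero] at this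
      linarith
  set n := p + r with hn
  set b : ℕ → ℝ := fun k => a ((k:ℤ) - r) with hb
  -- recurrence in range form
  have hrec' : ∀ j, ∑ k ∈ Finset.range (n+1), b k * v (j + k) = 0 := by
    intro j
    have h := hrec j
    rw [sum_icc_eq r p (fun ℓ => a ℓ * v (j + (ℓ + r).toNat))] at h
    simpa [hb] using h
  have hrecC : ∀ j, ∑ k ∈ Finset.range (n+1), (b k : ℂ) * (v (j + k) : ℂ) = 0 := by
    intro j
    have h := hrec' j
    exact_mod_cast congrArg (fun x : ℝ => (x : ℂ)) h
  -- the polynomial P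
  set P : Polynomial ℂ := ∑ k ∈ Finset.range (n+1), Polynomial.C (b k : ℂ) * Polynomial.X ^ k
    with hP
  have hPeq : (∑ ℓ ∈ Finset.Icc (-(r : ℤ)) (p : ℤ),
      Polynomial.C (a ℓ : ℂ) * Polynomial.X ^ (ℓ + r).toNat) = P := by
    rw [sum_icc_eq r p (fun ℓ => Polynomial.C (a ℓ : ℂ) * Polynomial.X ^ (ℓ + r).toNat)]
    apply Finset.sum_congr rfl
    intro k _
    congr 2
    omega
  have hPcoeff : ∀ m, P.coeff m = if m < n+1 then (b m : ℂ) else 0 := by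
    intro m
    rw [hP, Polynomial.finset_sum_coeff]
    simp only [Polynomial.coeff_C_mul, Polynomial.coeff_X_pow, mul_ite, mul_one, mul_zero]
    rw [Finset.sum_ite_eq (Finset.range (n+1)) m (fun k => (b k : ℂ))]
    simp [Finset.mem_range]
  have hbn : b n = a p := by rw [hb]; congr 1; push_cast [hn]; ring
  have hb0 : b 0 = a (-(r:ℤ)) := by rw [hb]; congr 1; push_cast; ring
  have hPn : P.coeff n = (a p : ℂ) := by rw [hPcoeff]; simp [hbn]
  have hPnne : P.coeff n ≠ 0 := by rw [hPn]; exact_mod_cast hap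
  have hPdeg : P.natDegree = n := by
    apply le_antisymm
    · rw [Polynomial.natDegree_le_iff_coeff_eq_zero]
      intro N hN
      rw [hPcoeff]
      simp [Nat.not_lt.2 hN]
    · exact Polynomial.le_natDegree_of_ne_zero hPnne
  have hPne : P ≠ 0 := fun h => hPnne (by rw [h]; simp)
  have hsplits : P.Splits := IsAlgClosed.splits P
  have hcard : Multiset.card P.roots = n := by
    rw [← hPdeg]; exact (Polynomial.splits_iff_card_roots.1 hsplits)
  have heval0 : P.eval 0 ≠ 0 := by
    rw [← Polynomial.coeff_zero_eq_eval_zero, hPcoeff]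
    simp [hb0]
    exact_mod_cast har
  have hroots0 : ∀ w ∈ P.roots, w ≠ 0 := by
    intro w hw h0
    have := (Polynomial.mem_roots hPne).1 hw
    rw [h0] at this
    exact heval0 this
  -- translate hcount
  rw [hPeq] at hcount
  have hcount' : Multiset.card (P.roots.filter (fun z => ‖z‖ < 1)) = r - 1 := by
    rw [← hcount]
    congr 1
    apply Multiset.filter_congr
    intro z hz
    exact ⟨fun h => ⟨h, hroots0 z hz⟩, fun h => h.1⟩
  
  -- split roots
  set Sin := P.roots.filter (fun z => ‖z‖ < 1) with hSin
  set Sout := P.roots.filter (fun z => ¬ ‖z‖ < 1) with hSout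
  have hSplitRoots : Sin + Sout = P.roots := Multiset.filter_add_not _ _
  have hSoutcard : Multiset.card Sout = p + 1 := by
    have h1 := congrArg Multiset.card hSplitRoots
    rw [Multiset.card_add] at h1
    rw [hcount'] at h1
    omega
  have hSoutmem : ∀ w ∈ Sout, 1 ≤ ‖w‖ := by
    intro w hw
    have := (Multiset.mem_filter.1 hw).2
    linarith [not_lt.1 this]
  have hSinmem : ∀ w ∈ Sin, ‖w‖ < 1 := fun w hw => (Multiset.mem_filter.1 hw).2
  have hSinroots : ∀ w ∈ Sin, w ∈ P.roots := fun w hw => (Multiset.mem_filter.1 hw).1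
  have hSoutroots : ∀ w ∈ Sout, w ∈ P.roots := fun w hw => (Multiset.mem_filter.1 hw).1
  -- the polynomials A and Bp
  have hapC : ((a p : ℂ)) ≠ 0 := by exact_mod_cast hap
  set A : Polynomial ℂ :=
    Polynomial.C ((a p : ℂ)) * (Sout.map (fun w => 1 - Polynomial.C w * Polynomial.X)).prod
    with hA
  set Bp : Polynomial ℂ := (Sin.map (fun w => 1 - Polynomial.C w * Polynomial.X)).prod with hBp
  have hAne : A ≠ 0 := by
    rw [hA]
    exact mul_ne_zero (by simpa using hapC) (prod_one_sub_ne Sout)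
  have hBne : Bp ≠ 0 := prod_one_sub_ne Sin
  have hdegA : A.natDegree = p + 1 := by
    rw [hA, Polynomial.natDegree_C_mul hapC,
      natDegree_prod_one_sub Sout (fun w hw => hroots0 w (hSoutroots w hw)), hSoutcard]
  have hdegB : Bp.natDegree = r - 1 := by
    rw [hBp, natDegree_prod_one_sub Sin (fun w hw => hroots0 w (hSinroots w hw)), hcount']
  -- factorization of P and the reflected polynomial
  have hPfact : P = Polynomial.C ((a p : ℂ)) * (P.roots.map (fun w => X - Polynomial.C w)).prod := by
    have h := hsplits.eq_prod_roots
    rwa [Polynomial.leadingCoeff, hPdeg, hPn] at h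
  have hQeval : ∀ z : ℂ, (A * Bp).eval z
      = (a p : ℂ) * (P.roots.map (fun w => 1 - w * z)).prod := by
    intro z
    rw [Polynomial.eval_mul, hA, hBp, Polynomial.eval_mul, Polynomial.eval_C,
      eval_prod_one_sub, eval_prod_one_sub, mul_assoc, ← Multiset.prod_add, ← Multiset.map_add,
      show Sout + Sin = P.roots from by rw [add_comm]; exact hSplitRoots]
  have hQeval0 : (A * Bp).eval 0 ≠ 0 := by
    rw [hQeval]
    apply mul_ne_zero hapC
    intro h
    rw [Multiset.prod_eq_zero_iff] at h
    obtain ⟨w, _, hw⟩ := Multiset.mem_map.1 h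
    simp at hw
  have hQe : ∀ z : ℂ, z ≠ 0 →
      (A * Bp).eval z = ∑ k ∈ Finset.range (n+1), (b k : ℂ) * z ^ (n - k) := by
    intro z hz
    rw [hQeval]
    have hPez : P.eval z⁻¹ = ∑ k ∈ Finset.range (n+1), (b k : ℂ) * (z⁻¹) ^ k := by
      rw [hP, Polynomial.eval_finset_sum]
      simp
    have key : (a p : ℂ) * (P.roots.map (fun w => 1 - w * z)).prod = z ^ n * P.eval z⁻¹ := by
      have h1 : Multiset.map (Polynomial.eval z⁻¹ ∘ fun w => X - Polynomial.C w) P.roots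
          = Multiset.map (fun w => z⁻¹ - w) P.roots := by
        apply Multiset.map_congr rfl
        intro w _
        simp
      have h2 : z ^ n = (Multiset.map (fun _ : ℂ => z) P.roots).prod := by
        rw [Multiset.map_const', Multiset.prod_replicate, hcard]
      have h3 : P.eval z⁻¹ = (a p : ℂ) * (Multiset.map (fun w => z⁻¹ - w) P.roots).prod := by
        conv_lhs => rw [hPfact]
        rw [Polynomial.eval_mul, Polynomial.eval_C, Polynomial.eval_multiset_prod,
          Multiset.map_map, h1]
      rw [h3, h2, show (Multiset.map (fun _ : ℂ => z) P.roots).prod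
          * ((a p : ℂ) * (Multiset.map (fun w => z⁻¹ - w) P.roots).prod)
          = (a p : ℂ) * ((Multiset.map (fun _ : ℂ => z) P.roots).prod
            * (Multiset.map (fun w => z⁻¹ - w) P.roots).prod) from by ring,
        ← Multiset.prod_map_mul]
      congr 2
      apply Multiset.map_congr rfl
      intro w _
      field_simp
    rw [key, hPez, Finset.mul_sum]
    apply Finset.sum_congr rfl
    intro k hk
    rw [Finset.mem_range] at hk
    rw [pow_sub₀ z hz (by omega : k ≤ n), inv_pow]
    ring
  
  -- the generating function
  set f : ℂ → ℂ := fun z => ∑' j, (v j : ℂ) * z ^ j with hf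
  have hvb : ∀ j, ‖((v j : ℂ))‖ ≤ M := fun j => by
    rw [Complex.norm_real, Real.norm_eq_abs]; exact hM j
  have hfs : ∀ z : ℂ, ‖z‖ < 1 → Summable (fun j => (v j : ℂ) * z ^ j) :=
    fun z hz => summable_aux _ M hvb z hz
  -- the numerator polynomial R
  set R : Polynomial ℂ := ∑ k ∈ Finset.range (n+1), Polynomial.C (b k : ℂ)
      * Polynomial.X ^ (n-k) * (∑ i ∈ Finset.range k, Polynomial.C (v i : ℂ) * Polynomial.X ^ i)
    with hR
  have hRdeg : R.natDegree ≤ n - 1 := by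
    rw [hR]
    apply Polynomial.natDegree_sum_le_of_forall_le
    intro k hk
    rw [Finset.mem_range] at hk
    rcases Nat.eq_zero_or_pos k with h0 | hpos
    · subst h0; simp
    · apply le_trans Polynomial.natDegree_mul_le
      have h1 : (Polynomial.C (b k:ℂ) * Polynomial.X ^ (n-k)).natDegree ≤ n - k :=
        le_trans (Polynomial.natDegree_C_mul_le _ _) (le_of_eq (Polynomial.natDegree_X_pow _))
      have h2 : (∑ i ∈ Finset.range k, Polynomial.C (v i:ℂ) * Polynomial.X ^ i).natDegree
          ≤ k - 1 := by
        apply Polynomial.natDegree_sum_le_of_forall_le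
        intro i hi
        rw [Finset.mem_range] at hi
        exact le_trans (Polynomial.natDegree_C_mul_le _ _)
          (by rw [Polynomial.natDegree_X_pow]; omega)
      exact le_trans (Nat.add_le_add h1 h2) (by omega)
  -- the key identity
  have hkey : ∀ z : ℂ, ‖z‖ < 1 → z ≠ 0 → (A*Bp).eval z * f z = R.eval z := by
    intro z hzlt hz0
    have hReval : R.eval z = ∑ k ∈ Finset.range (n+1),
        (b k:ℂ) * z^(n-k) * (∑ i ∈ Finset.range k, (v i:ℂ) * z^i) := by
      rw [hR, Polynomial.eval_finset_sum]
      apply Finset.sum_congr rfl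
      intro k _
      rw [Polynomial.eval_mul, Polynomial.eval_mul, Polynomial.eval_C, Polynomial.eval_pow,
        Polynomial.eval_X, Polynomial.eval_finset_sum]
      simp
    rw [hQe z hz0, hReval, Finset.sum_mul, ← sub_eq_zero, ← Finset.sum_sub_distrib]
    have hterm : ∀ k ∈ Finset.range (n+1),
        (b k:ℂ) * z^(n-k) * f z - (b k:ℂ) * z^(n-k) * (∑ i ∈ Finset.range k, (v i:ℂ)*z^i)
          = ∑' j, (b k:ℂ) * ((v (j+k):ℂ) * z^(n+j)) := by
      intro k hk
      rw [Finset.mem_range] at hk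
      have hsplit := Summable.sum_add_tsum_nat_add (f := fun j => (v j:ℂ) * z ^ j) k (hfs z hzlt)
      have h1 : f z - (∑ i ∈ Finset.range k, (v i:ℂ)*z^i) = ∑' j, (v (j+k):ℂ) * z^(j+k) := by
        rw [hf]
        simp only []
        linear_combination -hsplit
      calc (b k:ℂ) * z^(n-k) * f z - (b k:ℂ)*z^(n-k) * (∑ i ∈ Finset.range k, (v i:ℂ)*z^i)
          = (b k:ℂ) * (z^(n-k) * (f z - (∑ i ∈ Finset.range k, (v i:ℂ)*z^i))) := by ring
        _ = (b k:ℂ) * (z^(n-k) * ∑' j, (v (j+k):ℂ) * z^(j+k)) := by rw [h1]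
        _ = (b k:ℂ) * ∑' j, z^(n-k) * ((v (j+k):ℂ) * z^(j+k)) := by rw [tsum_mul_left]
        _ = (b k:ℂ) * ∑' j, (v (j+k):ℂ) * z^(n+j) := by
              congr 1
              apply tsum_congr
              intro j
              rw [show z^(n-k) * ((v (j+k):ℂ) * z^(j+k)) = (v (j+k):ℂ) * (z^(n-k) * z^(j+k))
                from by ring, ← pow_add]
              congr 2
              omega
        _ = ∑' j, (b k:ℂ) * ((v (j+k):ℂ) * z^(n+j)) := by rw [tsum_mul_left]
    rw [Finset.sum_congr rfl hterm]
    have hSummk : ∀ k ∈ Finset.range (n+1),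
        Summable (fun j => (b k:ℂ) * ((v (j+k):ℂ) * z^(n+j))) := by
      intro k _
      have hs1 : Summable (fun j => (v (j+k):ℂ) * z^j) :=
        summable_aux (fun j => (v (j+k):ℂ)) M (fun j => hvb _) z hzlt
      apply (hs1.mul_left ((b k:ℂ) * z^n)).congr
      intro j
      rw [pow_add]
      ring
    rw [← Summable.tsum_finsetSum hSummk]
    have : ∀ j : ℕ, ∑ k ∈ Finset.range (n+1), (b k:ℂ) * ((v (j+k):ℂ) * z^(n+j)) = 0 := by
      intro j
      have h2 : ∑ k ∈ Finset.range (n+1), (b k:ℂ) * ((v (j+k):ℂ) * z^(n+j))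
          = (∑ k ∈ Finset.range (n+1), (b k:ℂ) * (v (j+k):ℂ)) * z^(n+j) := by
        rw [Finset.sum_mul]
        apply Finset.sum_congr rfl
        intro k _
        ring
      rw [h2, hrecC j, zero_mul]
    rw [tsum_congr this, tsum_zero]
  
  have hQne : A * Bp ≠ 0 := mul_ne_zero hAne hBne
  haveI hFne : Filter.NeBot (nhdsWithin (1:ℝ) (Set.Ioo (0:ℝ) 1)) :=
    right_nhdsWithin_Ioo_neBot (by norm_num : (0:ℝ) < 1)
  have hcontq : ∀ (q : Polynomial ℂ) (ω : ℂ), Filter.Tendsto (fun t : ℝ => q.eval ((t:ℂ)*ω))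
      (nhdsWithin 1 (Set.Ioo (0:ℝ) 1)) (nhds (q.eval ω)) := by
    intro q ω
    have hc : Continuous fun t : ℝ => q.eval ((t:ℂ)*ω) :=
      (Polynomial.continuous q).comp ((Complex.continuous_ofReal).mul continuous_const)
    have h1 := hc.tendsto 1
    simp only [Complex.ofReal_one, one_mul] at h1
    exact h1.mono_left nhdsWithin_le_nhds
  have claim : ∀ ω : ℂ, ‖ω‖ ≤ 1 → ω ≠ 0 → R ≠ 0 →
      Polynomial.rootMultiplicity ω (A*Bp) ≤ Polynomial.rootMultiplicity ω R := by
    intro ω hω1 hω0 hRne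
    by_contra hlt
    push_neg at hlt
    set m := Polynomial.rootMultiplicity ω (A*Bp) with hm
    set s := Polynomial.rootMultiplicity ω R with hs
    set Q1 := (A*Bp) /ₘ (Polynomial.X - Polynomial.C ω)^m with hQ1
    set R1 := R /ₘ (Polynomial.X - Polynomial.C ω)^s with hR1
    have hQfact : (Polynomial.X - Polynomial.C ω)^m * Q1 = A*Bp :=
      Polynomial.pow_mul_divByMonic_rootMultiplicity_eq _ _
    have hRfact : (Polynomial.X - Polynomial.C ω)^s * R1 = R :=
      Polynomial.pow_mul_divByMonic_rootMultiplicity_eq _ _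
    have hQ1ω : Q1.eval ω ≠ 0 := Polynomial.eval_divByMonic_pow_rootMultiplicity_ne_zero ω hQne
    have hR1ω : R1.eval ω ≠ 0 := Polynomial.eval_divByMonic_pow_rootMultiplicity_ne_zero ω hRne
    set k := m - s with hk
    have hk1 : 1 ≤ k := by omega
    have hpoint : ∀ t : ℝ, t ∈ Set.Ioo (0:ℝ) 1 →
        ((1:ℂ)-(t:ℂ))^(k-1) * (-ω)^k * Q1.eval ((t:ℂ)*ω) * (((1:ℂ)-(t:ℂ)) * f ((t:ℂ)*ω))
          = R1.eval ((t:ℂ)*ω) := by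
      intro t ht
      obtain ⟨ht0, ht1⟩ := ht
      set z : ℂ := (t:ℂ)*ω with hz
      have hz0 : z ≠ 0 := mul_ne_zero (by exact_mod_cast ne_of_gt ht0) hω0
      have hzlt : ‖z‖ < 1 := by
        rw [hz, norm_mul, Complex.norm_real, Real.norm_eq_abs, abs_of_pos ht0]
        calc t * ‖ω‖ ≤ t * 1 := by nlinarith [norm_nonneg ω]
          _ < 1 := by linarith
      have hid := hkey z hzlt hz0
      rw [← hQfact, ← hRfact] at hid
      rw [Polynomial.eval_mul, Polynomial.eval_mul, Polynomial.eval_pow, Polynomial.eval_pow,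
        Polynomial.eval_sub, Polynomial.eval_X, Polynomial.eval_C] at hid
      have hzω : z - ω = ((t:ℂ)-1) * ω := by rw [hz]; ring
      have ht1ne : ((t:ℂ)-1) ≠ 0 := by
        intro h
        have h' : (t:ℂ) = 1 := by linear_combination h
        have h'' : t = 1 := by exact_mod_cast h'
        linarith
      have hfac : (((t:ℂ)-1)*ω)^s ≠ 0 := pow_ne_zero _ (mul_ne_zero ht1ne hω0)
      rw [hzω] at hid
      have hms : m = s + k := by omega
      rw [hms, pow_add] at hid
      have hid' : (((t:ℂ)-1)*ω)^s * ((((t:ℂ)-1)*ω)^k * Q1.eval z * f z)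
          = (((t:ℂ)-1)*ω)^s * R1.eval z := by linear_combination hid
      have hid2 := mul_left_cancel₀ hfac hid'
      calc ((1:ℂ)-(t:ℂ))^(k-1) * (-ω)^k * Q1.eval z * (((1:ℂ)-(t:ℂ)) * f z)
          = (((1:ℂ)-(t:ℂ))^(k-1) * ((1:ℂ)-(t:ℂ))) * (-ω)^k * Q1.eval z * f z := by ring
        _ = ((1:ℂ)-(t:ℂ))^k * (-ω)^k * Q1.eval z * f z := by
              rw [show ((1:ℂ)-(t:ℂ))^(k-1) * ((1:ℂ)-(t:ℂ)) = ((1:ℂ)-(t:ℂ))^k by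
                rw [← pow_succ]; congr 1; omega]
        _ = ((((1:ℂ)-(t:ℂ)) * (-ω))^k) * Q1.eval z * f z := by rw [mul_pow]
        _ = (((t:ℂ)-1)*ω)^k * Q1.eval z * f z := by
              rw [show ((1:ℂ)-(t:ℂ)) * (-ω) = ((t:ℂ)-1)*ω from by ring]
        _ = R1.eval z := hid2
    have hg1 : Filter.Tendsto
        (fun t : ℝ => ((1:ℂ)-(t:ℂ))^(k-1) * (-ω)^k * Q1.eval ((t:ℂ)*ω))
        (nhdsWithin 1 (Set.Ioo (0:ℝ) 1))
        (nhds (((1:ℂ)-1)^(k-1) * (-ω)^k * Q1.eval ω)) := by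
      apply Filter.Tendsto.mul _ (hcontq Q1 ω)
      apply Filter.Tendsto.mul_const
      apply Filter.Tendsto.pow
      have hc : Continuous fun t : ℝ => (1:ℂ) - (t:ℂ) :=
        continuous_const.sub Complex.continuous_ofReal
      have h1 := hc.tendsto 1
      simp only [Complex.ofReal_one] at h1
      exact h1.mono_left nhdsWithin_le_nhds
    have hg2 := abel_tendsto v hv M hM0 hM ω hω1
    have hL : Filter.Tendsto
        (fun t : ℝ => ((1:ℂ)-(t:ℂ))^(k-1) * (-ω)^k * Q1.eval ((t:ℂ)*ω)
          * (((1:ℂ)-(t:ℂ)) * f ((t:ℂ)*ω)))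
        (nhdsWithin 1 (Set.Ioo (0:ℝ) 1)) (nhds 0) := by
      have := hg1.mul hg2
      rwa [mul_zero] at this
    have hL2 : Filter.Tendsto (fun t : ℝ => R1.eval ((t:ℂ)*ω))
        (nhdsWithin 1 (Set.Ioo (0:ℝ) 1)) (nhds 0) := by
      apply hL.congr'
      exact Filter.eventuallyEq_of_mem self_mem_nhdsWithin hpoint
    exact hR1ω (tendsto_nhds_unique (hcontq R1 ω) hL2)
  have hdvd : R ≠ 0 → A ∣ R := by
    intro hRne
    apply Polynomial.Splits.dvd_of_roots_le_roots (IsAlgClosed.splits A) hAne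
    rw [Multiset.le_iff_count]
    intro ω
    rcases Nat.eq_zero_or_pos (Multiset.count ω A.roots) with h0 | hpos
    · rw [h0]; exact Nat.zero_le _
    · have hωroot : A.eval ω = 0 := by
        have hmem : ω ∈ A.roots := Multiset.count_pos.1 hpos
        exact ((Polynomial.mem_roots hAne).1 hmem)
      obtain ⟨w, hwmem, hwω⟩ : ∃ w ∈ Sout, 1 - w * ω = 0 := by
        rw [hA, Polynomial.eval_mul, Polynomial.eval_C, eval_prod_one_sub] at hωroot
        rcases mul_eq_zero.1 hωroot with h | h
        · exact absurd h hapC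
        · rw [Multiset.prod_eq_zero_iff] at h
          obtain ⟨x, hx, hxx⟩ := Multiset.mem_map.1 h
          exact ⟨x, hx, hxx⟩
      have hω0 : ω ≠ 0 := by
        intro h
        rw [h, mul_zero] at hwω
        simp at hwω
      have hω1 : ‖ω‖ ≤ 1 := by
        have hwω' : w * ω = 1 := by linear_combination -hwω
        have habs : ‖w‖ * ‖ω‖ = 1 := by
          rw [← norm_mul, hwω', norm_one]
        have hwge := hSoutmem w hwmem
        nlinarith [norm_nonneg ω]
      calc Multiset.count ω A.roots ≤ Multiset.count ω (A*Bp).roots :=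
            Multiset.le_iff_count.1 (Polynomial.roots.le_of_dvd hQne ⟨Bp, rfl⟩) ω
        _ = Polynomial.rootMultiplicity ω (A*Bp) := Polynomial.count_roots _
        _ ≤ Polynomial.rootMultiplicity ω R := claim ω hω1 hω0 hRne
        _ = Multiset.count ω R.roots := (Polynomial.count_roots _).symm
  
  -- write R = A * T
  obtain ⟨T, hT⟩ : ∃ T, R = A * T := by
    rcases eq_or_ne R 0 with h | h
    · exact ⟨0, by rw [h, mul_zero]⟩
    · exact hdvd h
  have hTcoeff_hi : ∀ m, r - 1 ≤ m → T.coeff m = 0 := by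
    intro m hm
    rcases eq_or_ne T 0 with h | hTne
    · rw [h]; simp
    · have hRne : R ≠ 0 := by rw [hT]; exact mul_ne_zero hAne hTne
      have hdm : R.natDegree = (p+1) + T.natDegree := by
        rw [hT, Polynomial.natDegree_mul hAne hTne, hdegA]
      have hTd : T.natDegree < r - 1 := by omega
      exact Polynomial.coeff_eq_zero_of_natDegree_lt (lt_of_lt_of_le hTd hm)
  -- A does not vanish near 0
  have hA0 : A.eval 0 ≠ 0 := fun h => hQeval0 (by rw [Polynomial.eval_mul, h, zero_mul])
  obtain ⟨δA, hδA0, hδA⟩ : ∃ δ > (0:ℝ), ∀ z : ℂ, ‖z‖ < δ → A.eval z ≠ 0 := by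
    have hc : ContinuousAt (fun z : ℂ => A.eval z) 0 := (Polynomial.continuous A).continuousAt
    have hev := hc.eventually_ne hA0
    rw [Metric.eventually_nhds_iff] at hev
    obtain ⟨ε, hε, h⟩ := hev
    exact ⟨ε, hε, fun z hz => h (by rwa [dist_zero_right])⟩
  -- convolution coefficients
  set conv : ℕ → ℂ := fun m => ∑ i ∈ Finset.range r,
      if i ≤ m then Bp.coeff i * (v (m-i):ℂ) else 0 with hconv
  set CB : ℝ := ∑ i ∈ Finset.range r, ‖Bp.coeff i‖ * M with hCB
  have hconvb : ∀ m, ‖conv m‖ ≤ CB := by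
    intro m
    rw [hconv]
    apply le_trans (norm_sum_le _ _)
    apply Finset.sum_le_sum
    intro i _
    by_cases h : i ≤ m
    · rw [if_pos h, norm_mul]
      exact mul_le_mul_of_nonneg_left (hvb _) (norm_nonneg _)
    · rw [if_neg h, norm_zero]
      positivity
  have hBdegr : Bp.natDegree < r := by omega
  have hBf : ∀ z : ℂ, ‖z‖ < 1 → Bp.eval z * f z = ∑' mm, conv mm * z ^ mm := by
    intro z hz
    have hBeval : Bp.eval z = ∑ i ∈ Finset.range r, Bp.coeff i * z^i :=
      Polynomial.eval_eq_sum_range' hBdegr z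
    have hFs : ∀ i : ℕ, Summable (fun mm =>
        (if i ≤ mm then Bp.coeff i * (v (mm-i):ℂ) else 0) * z^mm) := by
      intro i
      apply summable_aux _ (‖Bp.coeff i‖ * M) _ z hz
      intro mm
      by_cases h : i ≤ mm
      · rw [if_pos h, norm_mul]
        exact mul_le_mul_of_nonneg_left (hvb _) (norm_nonneg _)
      · rw [if_neg h, norm_zero]
        positivity
    have step : ∀ i : ℕ, (Bp.coeff i * z^i) * f z
        = ∑' mm, (if i ≤ mm then Bp.coeff i * (v (mm-i):ℂ) else 0) * z^mm := by
      intro i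
      have hinj : Function.Injective (fun j : ℕ => j + i) := add_left_injective i
      have hsupp : Function.support (fun mm =>
          (if i ≤ mm then Bp.coeff i * (v (mm-i):ℂ) else 0) * z^mm)
            ⊆ Set.range (fun j : ℕ => j + i) := by
        intro mm hmm
        rcases le_or_gt i mm with h | h
        · exact ⟨mm - i, by show mm - i + i = mm; omega⟩
        · exfalso
          apply hmm
          show (if i ≤ mm then Bp.coeff i * (v (mm-i):ℂ) else 0) * z^mm = 0
          rw [if_neg (by omega), zero_mul]
      have := Function.Injective.tsum_eq hinj (f := fun mm =>
          (if i ≤ mm then Bp.coeff i * (v (mm-i):ℂ) else 0) * z^mm) hsupp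
      rw [← this]
      have heq : ∀ j : ℕ, (if i ≤ j + i then Bp.coeff i * (v (j+i-i):ℂ) else 0) * z^(j+i)
          = (Bp.coeff i * z^i) * ((v j : ℂ) * z^j) := by
        intro j
        rw [if_pos (Nat.le_add_left i j), Nat.add_sub_cancel, pow_add]
        ring
      rw [tsum_congr heq, tsum_mul_left]
    rw [hBeval, Finset.sum_mul]
    rw [Finset.sum_congr rfl (fun i _ => step i)]
    rw [← Summable.tsum_finsetSum (fun i _ => hFs i)]
    apply tsum_congr
    intro mm
    rw [hconv, ← Finset.sum_mul]
  -- coefficient comparison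
  set CT : ℝ := ∑ i ∈ Finset.range (T.natDegree + 1), ‖T.coeff i‖ with hCT
  have hCT0 : 0 ≤ CT := Finset.sum_nonneg fun i _ => norm_nonneg _
  have hTb : ∀ mm, ‖T.coeff mm‖ ≤ CT := by
    intro mm
    by_cases h : mm < T.natDegree + 1
    · exact Finset.single_le_sum (f := fun i => ‖T.coeff i‖) (fun i _ => norm_nonneg _)
        (Finset.mem_range.2 h)
    · rw [Polynomial.coeff_eq_zero_of_natDegree_lt (by omega), norm_zero]
      exact hCT0
  have hTsummable : ∀ z : ℂ, Summable (fun mm => T.coeff mm * z ^ mm) := by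
    intro z
    apply summable_of_ne_finset_zero (s := Finset.range (T.natDegree + 1))
    intro mm hmm
    rw [Finset.mem_range] at hmm
    rw [Polynomial.coeff_eq_zero_of_natDegree_lt (by omega), zero_mul]
  have hTtsum : ∀ z : ℂ, (∑' mm, T.coeff mm * z^mm) = T.eval z := by
    intro z
    rw [tsum_eq_sum (s := Finset.range (T.natDegree + 1))]
    · exact (Polynomial.eval_eq_sum_range' (Nat.lt_succ_self _) z).symm
    · intro mm hmm
      rw [Finset.mem_range] at hmm
      rw [Polynomial.coeff_eq_zero_of_natDegree_lt (by omega), zero_mul]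
  set c : ℕ → ℂ := fun mm => conv mm - T.coeff mm with hc
  have hcb : ∀ mm, ‖c mm‖ ≤ CB + CT := by
    intro mm
    rw [hc]
    exact le_trans (norm_sub_le _ _) (add_le_add (hconvb mm) (hTb mm))
  set δ₀ : ℝ := min δA 1 with hδ₀
  have hδ₀pos : 0 < δ₀ := lt_min hδA0 one_pos
  have hc0 : ∀ t : ℝ, 0 < t → t < δ₀ → ∑' mm, c mm * (t:ℂ)^mm = 0 := by
    intro t ht htδ
    have ht1 : t < 1 := lt_of_lt_of_le htδ (min_le_right _ _)
    have htA : t < δA := lt_of_lt_of_le htδ (min_le_left _ _)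
    have hznorm : ‖(t:ℂ)‖ < 1 := by
      rw [Complex.norm_real, Real.norm_eq_abs, abs_of_pos ht]; exact ht1
    have hznormA : ‖(t:ℂ)‖ < δA := by
      rw [Complex.norm_real, Real.norm_eq_abs, abs_of_pos ht]; exact htA
    have hzne : (t:ℂ) ≠ 0 := by exact_mod_cast ne_of_gt ht
    have hkt := hkey (t:ℂ) hznorm hzne
    rw [hT] at hkt
    have hBfT : Bp.eval (t:ℂ) * f (t:ℂ) = T.eval (t:ℂ) := by
      apply mul_left_cancel₀ (hδA (t:ℂ) hznormA)
      have h1 : Polynomial.eval (t:ℂ) (A * Bp) = A.eval (t:ℂ) * Bp.eval (t:ℂ) :=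
        Polynomial.eval_mul
      have h2 : Polynomial.eval (t:ℂ) (A * T) = A.eval (t:ℂ) * T.eval (t:ℂ) :=
        Polynomial.eval_mul
      calc A.eval (t:ℂ) * (Bp.eval (t:ℂ) * f (t:ℂ))
          = Polynomial.eval (t:ℂ) (A*Bp) * f (t:ℂ) := by rw [h1]; ring
        _ = Polynomial.eval (t:ℂ) (A*T) := hkt
        _ = A.eval (t:ℂ) * T.eval (t:ℂ) := h2
    have hsconv : Summable (fun mm => conv mm * (t:ℂ)^mm) :=
      summable_aux conv CB hconvb _ hznorm
    calc ∑' mm, c mm * (t:ℂ)^mm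
        = ∑' mm, (conv mm * (t:ℂ)^mm - T.coeff mm * (t:ℂ)^mm) := by
          apply tsum_congr; intro mm; rw [hc]; ring
      _ = (∑' mm, conv mm * (t:ℂ)^mm) - ∑' mm, T.coeff mm * (t:ℂ)^mm :=
          Summable.tsum_sub hsconv (hTsummable _)
      _ = 0 := by rw [← hBf (t:ℂ) hznorm, hTtsum, hBfT, sub_self]
  have hczero := coeff_zero_of_tsum_zero c (CB + CT) hcb δ₀ hδ₀pos hc0
  have hcoeffs : ∀ mm, conv mm = T.coeff mm := by
    intro mm
    have := hczero mm
    rw [hc] at this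
    linear_combination this
  -- conclude u = 0
  have hBp1 : Bp.eval 1 ≠ 0 := by
    rw [hBp, eval_prod_one_sub]
    intro h
    rw [Multiset.prod_eq_zero_iff] at h
    obtain ⟨w, hw, hww⟩ := Multiset.mem_map.1 h
    have hw1 : w = 1 := by linear_combination -hww
    have habs := hSinmem w hw
    rw [hw1] at habs
    simp at habs
  have hBsum1 : ∑ i ∈ Finset.range r, Bp.coeff i = Bp.eval 1 := by
    rw [Polynomial.eval_eq_sum_range' hBdegr 1]
    apply Finset.sum_congr rfl
    intro i _
    rw [one_pow, mul_one]
  have huC : (u:ℂ) = 0 := by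
    have h1 := hcoeffs (r-1)
    rw [hTcoeff_hi (r-1) (le_refl _)] at h1
    simp only [hconv] at h1
    have h2 : ∀ i ∈ Finset.range r,
        (if i ≤ r-1 then Bp.coeff i * (v (r-1-i):ℂ) else 0) = Bp.coeff i * (-(u:ℂ)) := by
      intro i hi
      rw [Finset.mem_range] at hi
      rw [if_pos (by omega)]
      congr 1
      have : v (r-1-i) = -u := hbc _ (by omega)
      rw [this]
      push_cast
      ring
    rw [Finset.sum_congr rfl h2, ← Finset.sum_mul, hBsum1] at h1
    rcases mul_eq_zero.1 h1 with h | h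
    · exact absurd h hBp1
    · linear_combination -h
  have hu : u = 0 := by exact_mod_cast huC
  have hvsmall : ∀ j, j < r → v j = 0 := by
    intro j hj
    rw [hbc j hj, hu, neg_zero]
  -- T = 0, hence R = 0
  have hT0 : T = 0 := by
    ext mm
    rw [Polynomial.coeff_zero]
    rcases le_or_gt (r-1) mm with h | h
    · exact hTcoeff_hi mm h
    · rw [← hcoeffs mm]
      simp only [hconv]
      apply Finset.sum_eq_zero
      intro i _
      by_cases hle : i ≤ mm
      · rw [if_pos hle]
        rw [hvsmall (mm - i) (by omega)]
        simp
      · rw [if_neg hle]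
  have hR0 : R = 0 := by rw [hT, hT0, mul_zero]
  -- conclude v = 0
  obtain ⟨δQ, hδQ0, hδQ⟩ : ∃ δ > (0:ℝ), ∀ z : ℂ, ‖z‖ < δ → (A*Bp).eval z ≠ 0 := by
    have hcQ : ContinuousAt (fun z : ℂ => (A*Bp).eval z) 0 :=
      (Polynomial.continuous (A*Bp)).continuousAt
    have hev := hcQ.eventually_ne hQeval0
    rw [Metric.eventually_nhds_iff] at hev
    obtain ⟨ε, hε, h⟩ := hev
    exact ⟨ε, hε, fun z hz => h (by rwa [dist_zero_right])⟩
  set δ₁ : ℝ := min δQ 1 with hδ₁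
  have hδ₁pos : 0 < δ₁ := lt_min hδQ0 one_pos
  have hfzero : ∀ t : ℝ, 0 < t → t < δ₁ → ∑' j, (v j:ℂ) * (t:ℂ)^j = 0 := by
    intro t ht htδ
    have ht1 : t < 1 := lt_of_lt_of_le htδ (min_le_right _ _)
    have htQ : t < δQ := lt_of_lt_of_le htδ (min_le_left _ _)
    have hznorm : ‖(t:ℂ)‖ < 1 := by
      rw [Complex.norm_real, Real.norm_eq_abs, abs_of_pos ht]; exact ht1
    have hznormQ : ‖(t:ℂ)‖ < δQ := by
      rw [Complex.norm_real, Real.norm_eq_abs, abs_of_pos ht]; exact htQ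
    have hzne : (t:ℂ) ≠ 0 := by exact_mod_cast ne_of_gt ht
    have hkt := hkey (t:ℂ) hznorm hzne
    rw [hR0] at hkt
    simp only [Polynomial.eval_zero] at hkt
    have hfz : f (t:ℂ) = 0 := by
      rcases mul_eq_zero.1 hkt with h | h
      · exact absurd h (hδQ _ hznormQ)
      · exact h
    rw [hf] at hfz
    exact hfz
  have hvzero := coeff_zero_of_tsum_zero (fun j => (v j:ℂ)) M hvb δ₁ hδ₁pos hfzero
  refine ⟨hu, fun j => ?_⟩
  have h : ((v j : ℝ) : ℂ) = 0 := hvzero j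
  exact_mod_cast h
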